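/- Let n > 0 and let H : ℝ → ℝ be a C¹ function and ρ : ℝ → ℝ continuous with H'(t) = -(ρ(t) + H(t)²/n) for all t ∈ ℝ, where liminf_{t→+∞} ∫₀ᵗ ρ(s) ds ≥ 0 and liminf_{t→+∞} ∫₀ᵗ ρ(-s) ds ≥ 0 (the averaged condition in both time directions, noting that reversing time replaces H by -H). Then H(t) = 0 for all t ∈ ℝ. -/

import Mathlib

open Filter intervalIntegral MeasureTheory

lemma riccati_forward (n : ℝ) (hn : 0 < n) (H ρ : ℝ → ℝ) (hρc : Continuous ρ)
    (hH : ∀ t : ℝ, HasDerivAt H (-(ρ t + H t ^ 2 / n)) t)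
    (hliminf : (0 : EReal) ≤
      liminf (fun t : ℝ => ((∫ s in (0:ℝ)..t, ρ s : ℝ) : EReal)) atTop)
    (t₀ : ℝ) : 0 ≤ H t₀ + ∫ s in (0:ℝ)..t₀, ρ s := by
  have hHc : Continuous H := by
    rw [continuous_iff_continuousAt]; exact fun t => (hH t).continuousAt
  have hH2c : Continuous (fun t => H t ^ 2) := by continuity
  set r : ℝ → ℝ := fun t => ∫ s in (0:ℝ)..t, ρ s with hr_def
  have hr : ∀ t, HasDerivAt r (ρ t) t := fun t =>
    integral_hasDerivAt_right (hρc.intervalIntegrable _ _)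
      (hρc.stronglyMeasurableAtFilter _ _) hρc.continuousAt
  set I : ℝ → ℝ := fun t => ∫ s in t₀..t, H s ^ 2 with hI_def
  have hI : ∀ t, HasDerivAt I (H t ^ 2) t := fun t =>
    integral_hasDerivAt_right (hH2c.intervalIntegrable _ _)
      (hH2c.stronglyMeasurableAtFilter _ _) hH2c.continuousAt
  -- identity: H t + r t + I t / n is constant
  have hg : ∀ t, HasDerivAt (fun t => H t + r t + I t / n) 0 t := by
    intro t
    have := (((hH t).add (hr t)).add ((hI t).div_const n))
    refine this.congr_deriv ?_
    ring
  have hconst : ∀ t, H t + r t + I t / n = H t₀ + r t₀ := by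
    intro t
    have h1 : (fun t => H t + r t + I t / n) t = (fun t => H t + r t + I t / n) t₀ :=
      is_const_of_deriv_eq_zero (fun x => (hg x).differentiableAt)
        (fun x => (hg x).deriv) t t₀
    have hIt₀ : I t₀ = 0 := intervalIntegral.integral_same
    simpa [hIt₀] using h1
  by_contra hw
  push_neg at hw
  set w₀ : ℝ := H t₀ + r t₀ with hw₀_def
  set ε : ℝ := -w₀ / 3 with hε_def
  have hε : 0 < ε := by simp only [hε_def]; linarith
  -- eventually r t > -ε
  have hev : ∀ᶠ t in atTop, -ε < r t := by
    have h1 : ((-ε : ℝ) : EReal) < liminf (fun t : ℝ => ((r t : ℝ) : EReal)) atTop := by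
      refine lt_of_lt_of_le ?_ hliminf
      exact_mod_cast (by linarith : (-ε : ℝ) < 0)
    have := eventually_lt_of_lt_liminf h1
    filter_upwards [this] with t ht
    exact_mod_cast ht
  obtain ⟨T', hT'⟩ := eventually_atTop.1 hev
  set T : ℝ := max t₀ T' with hT_def
  have hImono : ∀ ⦃s t : ℝ⦄, t₀ ≤ s → s ≤ t → I s ≤ I t := by
    intro s t hs hst
    have hadd : I s + ∫ u in s..t, H u ^ 2 = I t :=
      intervalIntegral.integral_add_adjacent_intervals
        (hH2c.intervalIntegrable t₀ s) (hH2c.intervalIntegrable s t)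
    have hnn : 0 ≤ ∫ u in s..t, H u ^ 2 :=
      intervalIntegral.integral_nonneg hst (fun u _ => sq_nonneg (H u))
    linarith
  have hI0 : ∀ t, t₀ ≤ t → 0 ≤ I t := by
    intro t ht
    have h0 : I t₀ = 0 := intervalIntegral.integral_same
    have := hImono le_rfl ht
    linarith
  set K : ℝ → ℝ := fun t => 2 * ε + I t / n with hK_def
  have hKpos : ∀ t, T ≤ t → 0 < K t := by
    intro t ht
    have h0 : 0 ≤ I t := hI0 t (le_trans (le_max_left _ _) ht)
    have := div_nonneg h0 hn.le
    simp only [hK_def]; linarith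
  have hHle : ∀ t, T ≤ t → H t ≤ -K t := by
    intro t ht
    have h1 : H t + r t + I t / n = w₀ := hconst t
    have h2 : -ε < r t := hT' t (le_trans (le_max_right _ _) ht)
    simp only [hK_def]
    have : w₀ = -3 * ε := by simp only [hε_def]; ring
    linarith
  -- M = 1/K has derivative ≤ -1/n on [T, ∞)
  set φ : ℝ → ℝ := fun t => (K t)⁻¹ + t / n with hφ_def
  have hKd : ∀ t, HasDerivAt K (H t ^ 2 / n) t := by
    intro t
    have := ((hI t).div_const n).const_add (2 * ε)
    exact this
  have hφd : ∀ t ∈ Set.Ioi T, HasDerivAt φ (-(H t ^ 2 / n) / K t ^ 2 + 1 / n) t := by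
    intro t ht
    have hKne : K t ≠ 0 := (hKpos t (le_of_lt ht)).ne'
    exact ((hKd t).inv hKne).add ((hasDerivAt_id t).div_const n)
  have hφanti : AntitoneOn φ (Set.Ici T) := by
    apply antitoneOn_of_deriv_nonpos (convex_Ici T)
    · apply ContinuousOn.add
      · apply ContinuousOn.inv₀
        · exact (Continuous.continuousOn (by
            apply Continuous.add continuous_const
            exact (intervalIntegral.continuous_primitive
              (fun a b => hH2c.intervalIntegrable a b) t₀).div_const n))
        · intro t ht
          exact (hKpos t ht).ne'
      · exact (continuous_id.div_const n).continuousOn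
    · intro t ht
      rw [interior_Ici] at ht
      exact (hφd t ht).differentiableAt.differentiableWithinAt
    · intro t ht
      rw [interior_Ici] at ht
      rw [(hφd t ht).deriv]
      have hKp := hKpos t (le_of_lt ht)
      have hHK := hHle t (le_of_lt ht)
      have hK2 : K t ^ 2 ≤ H t ^ 2 := by nlinarith
      have h1 : 1 / n ≤ (H t ^ 2 / n) / K t ^ 2 := by
        rw [div_div, le_div_iff₀ (by positivity)]
        calc 1 / n * (n * K t ^ 2) = K t ^ 2 := by field_simp
        _ ≤ H t ^ 2 := hK2
      have h2 : -(H t ^ 2 / n) / K t ^ 2 = -((H t ^ 2 / n) / K t ^ 2) := by ring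
      linarith
  -- contradiction: evaluate at t₁ = T + n * (K T)⁻¹
  set t₁ : ℝ := T + n * (K T)⁻¹ with ht₁_def
  have hKT := hKpos T le_rfl
  have ht₁ : T ≤ t₁ := by
    have h : 0 ≤ n * (K T)⁻¹ := by positivity
    rw [ht₁_def]
    linarith
  have := hφanti (Set.self_mem_Ici) (Set.mem_Ici.2 ht₁) ht₁
  have hKt₁ := hKpos t₁ ht₁
  simp only [hφ_def, ht₁_def] at this
  have hinv : 0 < (K (T + n * (K T)⁻¹))⁻¹ := by positivity
  have hexp : (T + n * (K T)⁻¹) / n = T / n + (K T)⁻¹ := by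
    rw [add_div, mul_div_cancel_left₀ _ hn.ne']
  rw [hexp] at this
  linarith



/-- If `H` solves `H' = -(ρ + H²/n)` on all of `ℝ`, with the averaged condition
`liminf_{t→∞} ∫₀ᵗ ρ(s) ds ≥ 0` in both time directions, then `H ≡ 0`. -/
theorem stmt_4 (n : ℝ) (hn : 0 < n) (H ρ : ℝ → ℝ)
    (hρc : Continuous ρ)
    (hH : ∀ t : ℝ, HasDerivAt H (-(ρ t + H t ^ 2 / n)) t)
    (hliminfFwd : (0 : EReal) ≤
      Filter.liminf (fun t : ℝ => ((∫ s in (0:ℝ)..t, ρ s : ℝ) : EReal)) Filter.atTop)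
    (hliminfBwd : (0 : EReal) ≤
      Filter.liminf (fun t : ℝ => ((∫ s in (0:ℝ)..t, ρ (-s) : ℝ) : EReal)) Filter.atTop) :
    ∀ t : ℝ, H t = 0 := by
  have hr : ∀ t, HasDerivAt (fun t => ∫ s in (0:ℝ)..t, ρ s) (ρ t) t := fun t =>
    intervalIntegral.integral_hasDerivAt_right (hρc.intervalIntegrable _ _)
      (hρc.stronglyMeasurableAtFilter _ _) hρc.continuousAt
  have fwd : ∀ t, 0 ≤ H t + ∫ s in (0:ℝ)..t, ρ s :=
    riccati_forward n hn H ρ hρc hH hliminfFwd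
  have hHb : ∀ t : ℝ, HasDerivAt (fun t => -H (-t))
      (-((fun t => ρ (-t)) t + (-H (-t)) ^ 2 / n)) t := by
    intro t
    have h1 : HasDerivAt (fun t : ℝ => H (-t)) ((-(ρ (-t) + H (-t) ^ 2 / n)) * (-1)) t :=
      (hH (-t)).comp t (hasDerivAt_neg t)
    have h2 := h1.neg
    refine h2.congr_deriv ?_
    ring
  have bwd := riccati_forward n hn (fun t => -H (-t)) (fun t => ρ (-t))
    (hρc.comp continuous_neg) hHb hliminfBwd
  have hbwd : ∀ u : ℝ, 0 ≤ -H u - ∫ s in (0:ℝ)..u, ρ s := by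
    intro u
    have hb := bwd (-u)
    simp only [neg_neg] at hb
    have h1 : (∫ s in (0:ℝ)..(-u), ρ (-s)) = ∫ x in u..(0:ℝ), ρ x := by
      rw [intervalIntegral.integral_comp_neg]
      norm_num
    have h2 : (∫ x in u..(0:ℝ), ρ x) = -∫ s in (0:ℝ)..u, ρ s :=
      intervalIntegral.integral_symm 0 u
    rw [h1, h2] at hb
    linarith
  have heq : ∀ t, H t + ∫ s in (0:ℝ)..t, ρ s = 0 := by
    intro t
    have := fwd t
    have := hbwd t
    linarith
  intro t
  have hW : HasDerivAt (fun t => H t + ∫ s in (0:ℝ)..t, ρ s)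
      (-(ρ t + H t ^ 2 / n) + ρ t) t := (hH t).add (hr t)
  have hW0 : HasDerivAt (fun t : ℝ => H t + ∫ s in (0:ℝ)..t, ρ s) 0 t := by
    have : (fun t : ℝ => H t + ∫ s in (0:ℝ)..t, ρ s) = fun _ => (0:ℝ) := funext heq
    rw [this]
    exact hasDerivAt_const t 0
  have := hW.unique hW0
  have hsq : H t ^ 2 = 0 := by
    field_simp at this
    nlinarith [this, sq_nonneg (H t)]
  exact pow_eq_zero_iff (n := 2) (by norm_num) |>.1 hsq
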